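/- Let M be a monoid of right-I-type with I-structure ν : ℕⁿ → M. Then ν is compatible with left-divisibility: for all u, v ∈ ℕⁿ, u divides v in ℕⁿ (componentwise) if and only if ν(u) left-divides ν(v) in M. -/
import Mathlib


/-- for a cancellative monoid `M` of right-I-type with I-structure
`ν : ℕⁿ → M`, the map `ν` is compatible with left-divisibility: `u` divides `v`
componentwise in `ℕⁿ` if and only if `ν(u)` left-divides `ν(v)` in `M`. -/
theorem stmt11 {X : Type*} [Fintype X] [DecidableEq X] {M : Type*} [Monoid M]
    (hlc : ∀ a b c : M, a * b = a * c → b = c)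
    (hrc : ∀ a b c : M, b * a = c * a → b = c)
    (σ : X → M)
    (ν : (X → ℕ) → M) (hν : Function.Bijective ν) (hone : ν 0 = 1)
    (π : (X → ℕ) → Equiv.Perm X)
    (hstep : ∀ (u : X → ℕ) (x : X), ν (u + Pi.single x 1) = ν u * σ (π u x)) :
    ∀ u v : X → ℕ, (∀ x : X, u x ≤ v x) ↔ ∃ g : M, ν v = ν u * g := by
  -- Key lemma: multiplying ν u by any ν w lands on some ν t with u ≤ t.
  have key : ∀ n (w : X → ℕ), (∑ x, w x) = n → ∀ u : X → ℕ,
      ∃ t : X → ℕ, (∀ x, u x ≤ t x) ∧ ν u * ν w = ν t := by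
    intro n
    induction n with
    | zero =>
      intro w hw u
      have hw0 : w = 0 := by
        funext x
        have := (Finset.sum_eq_zero_iff.mp hw) x (Finset.mem_univ x)
        simpa using this
      exact ⟨u, fun _ => le_rfl, by simp [hw0, hone]⟩
    | succ n ih =>
      intro w hw u
      obtain ⟨x, hx⟩ : ∃ x, w x ≠ 0 := by
        by_contra h
        push_neg at h
        simp [h] at hw
      set w' := w - Pi.single x 1 with hw'
      have hdd : w = w' + Pi.single x 1 := by
        funext y
        by_cases hy : y = x
        · subst hy
          simp [hw', Nat.sub_add_cancel (Nat.one_le_iff_ne_zero.mpr hx)]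
        · simp [hw', Pi.single_eq_of_ne hy]
      have hsum : (∑ y, w' y) = n := by
        have : (∑ y, w y) = (∑ y, w' y) + 1 := by
          rw [hdd]; simp [Finset.sum_add_distrib]
        omega
      obtain ⟨t', ht', heq⟩ := ih w' hsum u
      refine ⟨t' + Pi.single ((π t').symm (π w' x)) 1, ?_, ?_⟩
      · intro y; exact le_trans (ht' y) (by simp)
      · rw [hdd, hstep, ← mul_assoc, heq, hstep, Equiv.apply_symm_apply]
  -- Forward lemma: adding d to u is realized by right multiplication.
  have fwd : ∀ n (d u : X → ℕ), (∑ x, d x) = n → ∃ g : M, ν (u + d) = ν u * g := by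
    intro n
    induction n with
    | zero =>
      intro d u hd
      have hd0 : d = 0 := by
        funext x
        have := (Finset.sum_eq_zero_iff.mp hd) x (Finset.mem_univ x)
        simpa using this
      exact ⟨1, by simp [hd0]⟩
    | succ n ih =>
      intro d u hd
      obtain ⟨x, hx⟩ : ∃ x, d x ≠ 0 := by
        by_contra h
        push_neg at h
        simp [h] at hd
      set d' := d - Pi.single x 1 with hd'
      have hdd : d = d' + Pi.single x 1 := by
        funext y
        by_cases hy : y = x
        · subst hy
          simp [hd', Nat.sub_add_cancel (Nat.one_le_iff_ne_zero.mpr hx)]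
        · simp [hd', Pi.single_eq_of_ne hy]
      have hsum : (∑ y, d' y) = n := by
        have : (∑ y, d y) = (∑ y, d' y) + 1 := by
          rw [hdd]; simp [Finset.sum_add_distrib]
        omega
      obtain ⟨g, hg⟩ := ih d' u hsum
      refine ⟨g * σ (π (u + d') x), ?_⟩
      rw [hdd, ← add_assoc, hstep, hg, mul_assoc]
  intro u v
  constructor
  · intro huv
    have hv : v = u + (v - u) := by
      funext x
      simpa using (Nat.add_sub_cancel' (huv x)).symm
    obtain ⟨g, hg⟩ := fwd (∑ x, (v - u) x) (v - u) u rfl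
    exact ⟨g, by rw [hv]; exact hg⟩
  · rintro ⟨g, hg⟩
    obtain ⟨w, rfl⟩ := hν.2 g
    obtain ⟨t, ht, heq⟩ := key (∑ x, w x) w rfl u
    have : v = t := hν.1 (by rw [hg, heq])
    intro x
    rw [this]
    exact ht x
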